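/- Let m : (0,∞) → (0,∞) be non-increasing with r^α·m(r) non-increasing for some α > 0, and set c_α = 1 + (3/2)^{−α} ∈ (1,2). Then there exists γ₀ > 0, depending only on α and κ, such that the following holds for every 0 < γ ≤ γ₀, every κ > 0, every B ≥ 1, and every δ > 0 with m(δ) = B/κ: if ω : [0,∞) → [0,∞) is continuous, concave, non-decreasing, with ω(0) = 0, ω(δ) ≥ Bδ/2, and ω′(ξ) = γ m(2ξ) for all ξ > δ, then ω(2ξ) ≤ c_α ω(ξ) for all ξ ≥ δ. -/

import Mathlib

open MeasureTheory Set Real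

/-- Endpoint comparison from nonnegative derivative on the open interval plus
continuity on the closed interval. -/
lemma mono_endpoints_aux {f f' : ℝ → ℝ} {a b : ℝ} (hab : a ≤ b)
    (hc : ContinuousOn f (Icc a b))
    (hd : ∀ x ∈ Ioo a b, HasDerivAt f (f' x) x)
    (h0 : ∀ x ∈ Ioo a b, 0 ≤ f' x) : f a ≤ f b := by
  have hmono : MonotoneOn f (Icc a b) := by
    apply monotoneOn_of_hasDerivWithinAt_nonneg (convex_Icc a b) hc (f' := f')
    · intro x hx
      rw [interior_Icc] at hx
      exact (hd x hx).hasDerivWithinAt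
    · intro x hx
      rw [interior_Icc] at hx
      exact h0 x hx
  exact hmono (left_mem_Icc.2 hab) (right_mem_Icc.2 hab) hab

set_option maxHeartbeats 1000000 in
/-- **Doubling bound for the constructed moduli of continuity.** Let `m` be positive and
non-increasing with `r^α m(r)` non-increasing for some `α > 0`, and let
`c_α = 1 + (3/2)^{-α} ∈ (1,2)`. There exists `γ₀ > 0`, depending only on `α` and `κ`,
such that for every `0 < γ ≤ γ₀`, every `B ≥ 1` and `δ > 0` with `m(δ) = B/κ`: if `ω` is
continuous, concave, non-decreasing on `[0,∞)` with `ω(0) = 0`, `ω(δ) ≥ Bδ/2`, and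
`ω'(ξ) = γ m(2ξ)` for `ξ > δ`, then `ω(2ξ) ≤ c_α ω(ξ)` for all `ξ ≥ δ`. -/
theorem modulus_doubling_bound (α κ : ℝ) (hα : 0 < α) (hκ : 0 < κ) :
    ∃ γ₀ > (0:ℝ), ∀ γ : ℝ, 0 < γ → γ ≤ γ₀ →
      ∀ m : ℝ → ℝ,
        (∀ r > (0:ℝ), 0 < m r) →
        AntitoneOn m (Ioi 0) →
        AntitoneOn (fun r => r ^ α * m r) (Ioi 0) →
      ∀ B : ℝ, 1 ≤ B → ∀ δ > (0:ℝ), m δ = B / κ →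
      ∀ ω : ℝ → ℝ,
        (∀ s : ℝ, 0 ≤ s → 0 ≤ ω s) →
        ContinuousOn ω (Ici 0) →
        ConcaveOn ℝ (Ici 0) ω →
        MonotoneOn ω (Ici 0) →
        ω 0 = 0 →
        B * δ / 2 ≤ ω δ →
        (∀ ξ : ℝ, δ < ξ → HasDerivAt ω (γ * m (2 * ξ)) ξ) →
      ∀ ξ : ℝ, δ ≤ ξ → ω (2 * ξ) ≤ (1 + (3/2 : ℝ) ^ (-α)) * ω ξ := by
  refine ⟨κ / 2, by positivity, ?_⟩
  intro γ hγ hγ0 m hmpos hmanti hmpow B hB δ hδ hmδ ω hωnn hωcont hωconc hωmono hω0 hωδ hωderiv ξ hξ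
  set A : ℝ := (3/2 : ℝ) ^ (-α) with hA
  have hApos : 0 < A := rpow_pos_of_pos (by norm_num) _
  have hξpos : 0 < ξ := lt_of_lt_of_le hδ hξ
  set Mξ : ℝ := m (2 * ξ) with hMξ
  have hMξpos : 0 < Mξ := hmpos _ (by positivity)
  have h2α : (0:ℝ) < (2:ℝ) ^ α := rpow_pos_of_pos (by norm_num) _
  have hξα : (0:ℝ) < ξ ^ α := rpow_pos_of_pos hξpos _
  -- basic: 1 - α ≤ A
  have h1αA : 1 - α ≤ A := by
    have hlog : Real.log (3/2) ≤ 1/2 := by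
      have := Real.log_le_sub_one_of_pos (x := (3/2:ℝ)) (by norm_num)
      linarith
    have hlognn : 0 ≤ Real.log (3/2) := Real.log_nonneg (by norm_num)
    have hexp : 1 + (-α * Real.log (3/2)) ≤ Real.exp (-α * Real.log (3/2)) := by
      have := Real.add_one_le_exp (-α * Real.log (3/2))
      linarith
    have hAe : A = Real.exp (-α * Real.log (3/2)) := by
      rw [hA, Real.rpow_def_of_pos (by norm_num)]
      congr 1
      ring
    rw [hAe]
    nlinarith [mul_nonneg hα.le hlognn, mul_le_mul_of_nonneg_left hlog hα.le]
  -- Step 1: upper bound ω(2ξ) - ω(ξ) ≤ γ * Mξ * ξ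
  have step1 : ω (2 * ξ) - ω ξ ≤ γ * Mξ * ξ := by
    have key := mono_endpoints_aux (f := fun s => γ * Mξ * s - ω s)
        (f' := fun s => γ * Mξ - γ * m (2 * s)) (a := ξ) (b := 2 * ξ)
        (by linarith)
        (by
          apply ContinuousOn.sub (by fun_prop)
          exact hωcont.mono (fun x hx => le_trans hξpos.le hx.1))
        (by
          intro x hx
          have h := ((hasDerivAt_id x).const_mul (γ * Mξ)).sub
            (hωderiv x (lt_of_le_of_lt hξ hx.1))
          rw [mul_one] at h
          exact h)
        (by
          intro x hx
          have hmm : m (2 * x) ≤ Mξ := by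
            apply hmanti (by simp [mem_Ioi]; positivity)
              (by simp [mem_Ioi]; linarith [hx.1, hξpos])
            linarith [hx.1]
          show 0 ≤ γ * Mξ - γ * m (2 * x)
          nlinarith)
    linarith
  -- Step 2: lower bound on ω ξ
  set c : ℝ := γ * Mξ * ξ ^ α / A with hc
  have hcnn : 0 ≤ c := by positivity
  have hc1 : c * (1 - α) ≤ γ * Mξ * ξ ^ α := by
    rw [hc, div_mul_eq_mul_div, div_le_iff₀ hApos]
    have := mul_le_mul_of_nonneg_left h1αA (show (0:ℝ) ≤ γ * Mξ * ξ ^ α by positivity)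
    linarith
  have step2 : ω δ + c * (ξ ^ (1 - α) - δ ^ (1 - α)) ≤ ω ξ := by
    have key := mono_endpoints_aux (f := fun s => ω s - c * s ^ (1 - α))
        (f' := fun s => γ * m (2 * s) - c * ((1 - α) * s ^ (-α))) (a := δ) (b := ξ) hξ
        (by
          apply ContinuousOn.sub
          · exact hωcont.mono (fun x hx => le_trans hδ.le hx.1)
          · apply ContinuousOn.mul continuousOn_const
            intro x hx
            exact (Real.continuousAt_rpow_const x _
              (Or.inl (lt_of_lt_of_le hδ hx.1).ne')).continuousWithinAt)
        (by
          intro x hx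
          have hxpos : 0 < x := lt_trans hδ hx.1
          have h1 : HasDerivAt (fun s : ℝ => s ^ (1 - α)) ((1 - α) * x ^ (1 - α - 1)) x :=
            Real.hasDerivAt_rpow_const (Or.inl hxpos.ne')
          have h2 : HasDerivAt (fun s : ℝ => c * s ^ (1 - α)) (c * ((1 - α) * x ^ (-α))) x := by
            have := h1.const_mul c
            rw [show (1 - α - 1) = -α by ring] at this
            exact this
          exact (hωderiv x hx.1).sub h2)
        (by
          intro x hx
          have hxpos : 0 < x := lt_trans hδ hx.1
          have hxα : (0:ℝ) < x ^ (-α) := rpow_pos_of_pos hxpos _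
          have hxαpos : (0:ℝ) < x ^ α := rpow_pos_of_pos hxpos _
          have hpow : (2 * ξ) ^ α * Mξ ≤ (2 * x) ^ α * m (2 * x) := by
            have := hmpow (a := 2 * x) (b := 2 * ξ)
              (by simp [mem_Ioi]; positivity) (by simp [mem_Ioi]; positivity)
              (by linarith [hx.2])
            simpa using this
          have hsplit : (2 * ξ) ^ α = 2 ^ α * ξ ^ α := Real.mul_rpow (by norm_num) hξpos.le
          have hsplit' : (2 * x) ^ α = 2 ^ α * x ^ α := Real.mul_rpow (by norm_num) hxpos.le
          have hk : ξ ^ α * Mξ ≤ x ^ α * m (2 * x) := by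
            rw [hsplit, hsplit'] at hpow
            nlinarith
          have hm2x : ξ ^ α * x ^ (-α) * Mξ ≤ m (2 * x) := by
            have hxinv : x ^ (-α) = (x ^ α)⁻¹ := Real.rpow_neg hxpos.le α
            have heq : ξ ^ α * (x ^ α)⁻¹ * Mξ = ξ ^ α * Mξ / x ^ α := by ring
            rw [hxinv, heq, div_le_iff₀ hxαpos]
            nlinarith
          have hfinal : c * ((1 - α) * x ^ (-α)) ≤ γ * m (2 * x) :=
            calc c * ((1 - α) * x ^ (-α)) = c * (1 - α) * x ^ (-α) := by ring
            _ ≤ γ * Mξ * ξ ^ α * x ^ (-α) := mul_le_mul_of_nonneg_right hc1 hxα.le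
            _ = γ * (ξ ^ α * x ^ (-α) * Mξ) := by ring
            _ ≤ γ * m (2 * x) := mul_le_mul_of_nonneg_left hm2x hγ.le
          show 0 ≤ γ * m (2 * x) - c * ((1 - α) * x ^ (-α))
          linarith)
    linarith
  -- Step 3: γ * Mξ * ξ^α * δ^(1-α) ≤ A * (B * δ / 2)
  have hδα : (0:ℝ) < δ ^ α := rpow_pos_of_pos hδ _
  have hδ1α : (0:ℝ) < δ ^ (1 - α) := rpow_pos_of_pos hδ _
  have hδsplit : δ ^ α * δ ^ (1 - α) = δ := by
    rw [← Real.rpow_add hδ]; norm_num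
  have hBκ : (0:ℝ) < B / κ := by positivity
  have h2A : ((2:ℝ) ^ α)⁻¹ ≤ A := by
    have h1 : ((2:ℝ)⁻¹) ^ α ≤ ((2:ℝ)/3) ^ α :=
      Real.rpow_le_rpow (by norm_num) (by norm_num) hα.le
    rw [Real.inv_rpow (by norm_num : (0:ℝ) ≤ 2)] at h1
    have h2 : ((2:ℝ)/3) ^ α = A := by
      rw [hA, Real.rpow_neg (by norm_num : (0:ℝ) ≤ 3/2),
        ← Real.inv_rpow (by norm_num : (0:ℝ) ≤ 3/2)]
      norm_num
    linarith
  have step3 : γ * Mξ * ξ ^ α * δ ^ (1 - α) ≤ A * (B * δ / 2) := by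
    have hpow : (2 * ξ) ^ α * Mξ ≤ δ ^ α * (B / κ) := by
      have := hmpow (a := δ) (b := 2 * ξ) (by simpa [mem_Ioi] using hδ)
        (by simp [mem_Ioi]; positivity) (by linarith)
      simpa [hmδ] using this
    have hsplit : (2 * ξ) ^ α = 2 ^ α * ξ ^ α := Real.mul_rpow (by norm_num) hξpos.le
    have h1 : ξ ^ α * Mξ ≤ δ ^ α * (B / κ) / 2 ^ α := by
      rw [le_div_iff₀ h2α]
      calc ξ ^ α * Mξ * 2 ^ α = (2 * ξ) ^ α * Mξ := by rw [hsplit]; ring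
      _ ≤ δ ^ α * (B / κ) := hpow
    have h3 : γ * Mξ * ξ ^ α * δ ^ (1 - α) ≤ γ * (δ ^ α * (B / κ) / 2 ^ α) * δ ^ (1 - α) := by
      have := mul_le_mul_of_nonneg_right (mul_le_mul_of_nonneg_left h1 hγ.le) hδ1α.le
      calc γ * Mξ * ξ ^ α * δ ^ (1 - α) = γ * (ξ ^ α * Mξ) * δ ^ (1 - α) := by ring
      _ ≤ γ * (δ ^ α * (B / κ) / 2 ^ α) * δ ^ (1 - α) := this
    have h4 : γ * (δ ^ α * (B / κ) / 2 ^ α) * δ ^ (1 - α)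
        = γ * (B / κ) * (δ ^ α * δ ^ (1 - α)) * ((2:ℝ) ^ α)⁻¹ := by ring
    rw [hδsplit] at h4
    have h5 : γ * (B / κ) * δ * ((2:ℝ) ^ α)⁻¹ ≤ (κ/2) * (B / κ) * δ * A := by
      have ha : γ * (B / κ) * δ ≤ (κ/2) * (B / κ) * δ :=
        mul_le_mul_of_nonneg_right (mul_le_mul_of_nonneg_right hγ0 hBκ.le) hδ.le
      exact mul_le_mul ha h2A (by positivity) (by positivity)
    have h6 : (κ/2) * (B / κ) * δ * A = A * (B * δ / 2) := by
      field_simp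
      try ring
    rw [h4] at h3
    linarith
  -- combine everything
  have hξsplit : ξ ^ α * ξ ^ (1 - α) = ξ := by
    rw [← Real.rpow_add hξpos]; norm_num
  have hcξ : c * ξ ^ (1 - α) = γ * Mξ * ξ / A := by
    have : c * ξ ^ (1 - α) = γ * Mξ * (ξ ^ α * ξ ^ (1 - α)) / A := by rw [hc]; ring
    rw [this, hξsplit]
  have hcδ : c * δ ^ (1 - α) = γ * Mξ * ξ ^ α * δ ^ (1 - α) / A := by
    rw [hc]; ring
  have hmain : γ * Mξ * ξ ≤ A * ω ξ := by
    have h7 : ω δ + γ * Mξ * ξ / A - γ * Mξ * ξ ^ α * δ ^ (1 - α) / A ≤ ω ξ := by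
      have h := step2
      rw [mul_sub, hcξ, hcδ] at h
      linarith
    have h8 := mul_le_mul_of_nonneg_left h7 hApos.le
    have h9 : A * (ω δ + γ * Mξ * ξ / A - γ * Mξ * ξ ^ α * δ ^ (1 - α) / A)
        = A * ω δ + γ * Mξ * ξ - γ * Mξ * ξ ^ α * δ ^ (1 - α) := by
      field_simp
      try ring
    rw [h9] at h8
    have h10 : A * (B * δ / 2) ≤ A * ω δ := mul_le_mul_of_nonneg_left hωδ hApos.le
    linarith
  calc ω (2 * ξ) ≤ ω ξ + γ * Mξ * ξ := by linarith [step1]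
  _ ≤ ω ξ + A * ω ξ := by linarith
  _ = (1 + A) * ω ξ := by ring
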